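/- If A is a normalized potential with spectral gap, then ker L_A and C = {g − g∘T + c} are closed topological complements in X(Ω): X(Ω) = ker L_A ⊕ C. -/

import Mathlib

/-- ker L_A and C = {g - g∘T + c} are closed topological
complements in X(Ω). -/
theorem ker_transfer_compl_coboundaries
    {X : Type*} [NormedAddCommGroup X] [NormedSpace ℝ X] [CompleteSpace X]
    (L Tc : X →L[ℝ] X) (μ : X →L[ℝ] ℝ) (e : X)
    (hμL : ∀ f : X, μ (L f) = μ f)
    (hμT : ∀ f : X, μ (Tc f) = μ f)
    (hleft : ∀ f : X, L (Tc f) = f)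
    (hμe : μ e = 1) (hLe : L e = e) (hTe : Tc e = e)
    (D δ : ℝ) (hD : 0 < D) (hδ0 : 0 < δ) (hδ1 : δ < 1)
    (hgap : ∀ (n : ℕ) (f : X), μ f = 0 → ‖(L ^ n) f‖ ≤ D * (1 - δ) ^ n * ‖f‖) :
    IsClosed ((LinearMap.range ((ContinuousLinearMap.id ℝ X - Tc : X →L[ℝ] X) : X →ₗ[ℝ] X)
        ⊔ Submodule.span ℝ {e} : Submodule ℝ X) : Set X) ∧
    IsCompl (LinearMap.ker ((L : X →L[ℝ] X) : X →ₗ[ℝ] X))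
      (LinearMap.range ((ContinuousLinearMap.id ℝ X - Tc : X →L[ℝ] X) : X →ₗ[ℝ] X)
        ⊔ Submodule.span ℝ {e}) := by
  set C : Submodule ℝ X :=
    LinearMap.range ((ContinuousLinearMap.id ℝ X - Tc : X →L[ℝ] X) : X →ₗ[ℝ] X)
      ⊔ Submodule.span ℝ {e} with hC
  have hδ : (0:ℝ) ≤ 1 - δ := by linarith
  have hδ' : (1:ℝ) - δ < 1 := by linarith
  set R : X →L[ℝ] X := ContinuousLinearMap.id ℝ X - μ.smulRight e with hR
  have hRf : ∀ f : X, R f = f - μ f • e := fun f => rfl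
  have hμR : ∀ f : X, μ (R f) = 0 := by
    intro f
    simp [hRf, hμe]
  have hμker : ∀ f : X, L f = 0 → μ f = 0 := by
    intro f h
    rw [← hμL f, h, map_zero]
  -- decay of iterates on ker μ
  have hlim : ∀ f : X, μ f = 0 →
      Filter.Tendsto (fun n : ℕ => (L ^ n) f) Filter.atTop (nhds 0) := by
    intro f hf
    apply squeeze_zero_norm (fun n => hgap n f hf)
    have h1 : Filter.Tendsto (fun n : ℕ => (1 - δ) ^ n) Filter.atTop (nhds 0) :=
      tendsto_pow_atTop_nhds_zero_of_lt_one hδ hδ'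
    have h2 := (h1.const_mul D).mul_const ‖f‖
    simpa [mul_assoc] using h2
  -- operator series
  have hsum : Summable (fun n : ℕ => (L ^ (n+1)).comp R) := by
    apply Summable.of_norm_bounded (g := fun n : ℕ => (D * (1-δ) * ‖R‖) * (1-δ)^n)
    · exact (summable_geometric_of_lt_one hδ hδ').mul_left _
    · intro n
      apply ContinuousLinearMap.opNorm_le_bound
      · exact mul_nonneg (mul_nonneg (mul_nonneg hD.le hδ) (norm_nonneg R)) (pow_nonneg hδ n)
      · intro f
        calc ‖(L ^ (n+1)) (R f)‖ ≤ D * (1-δ)^(n+1) * ‖R f‖ := hgap _ _ (hμR f)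
          _ ≤ D * (1-δ)^(n+1) * (‖R‖ * ‖f‖) := by
              apply mul_le_mul_of_nonneg_left (R.le_opNorm f)
              exact mul_nonneg hD.le (pow_nonneg hδ _)
          _ = D * (1-δ) * ‖R‖ * (1-δ)^n * ‖f‖ := by ring
  set Q : X →L[ℝ] X := ∑' n : ℕ, (L ^ (n+1)).comp R with hQ
  have hQf : ∀ f : X, HasSum (fun n : ℕ => (L ^ (n+1)) (R f)) (Q f) := by
    intro f
    have := (ContinuousLinearMap.apply ℝ X f).hasSum hsum.hasSum
    simpa using this
  -- Q vanishes on ker L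
  have hQker : ∀ f : X, L f = 0 → Q f = 0 := by
    intro f h
    have hμf : μ f = 0 := hμker f h
    have h0 : ∀ n : ℕ, (L ^ (n+1)) (R f) = 0 := by
      intro n
      rw [hRf, hμf, zero_smul, sub_zero, pow_succ, ContinuousLinearMap.mul_apply, h, map_zero]
    have hz : HasSum (fun n : ℕ => (L ^ (n+1)) (R f)) 0 := by
      simp only [h0]; exact hasSum_zero
    exact (hQf f).unique hz
  have hQe : Q e = 0 := by
    have h0 : ∀ n : ℕ, (L ^ (n+1)) (R e) = 0 := by
      intro n
      rw [hRf, hμe, one_smul, sub_self, map_zero]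
    have hz : HasSum (fun n : ℕ => (L ^ (n+1)) (R e)) 0 := by
      simp only [h0]; exact hasSum_zero
    exact (hQf e).unique hz
  -- key relation: (L - I) Q f = μ f • e - L f
  have hLQ : ∀ f : X, L (Q f) - Q f = μ f • e - L f := by
    intro f
    set h : ℕ → X := fun n => (L ^ (n+1)) (R f) with hh
    have h1 : HasSum (fun n : ℕ => h (n+1)) (L (Q f)) := by
      have := L.hasSum (hQf f)
      convert this using 2 with n
      simp only [hh]
      rw [pow_succ', ContinuousLinearMap.mul_apply]
    have h2 : HasSum (fun n : ℕ => h (n+1) - h n) (L (Q f) - Q f) := h1.sub (hQf f)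
    have h3 := h2.tendsto_sum_nat
    have h4 : Filter.Tendsto (fun N : ℕ => ∑ n ∈ Finset.range N, (h (n+1) - h n))
        Filter.atTop (nhds (0 - h 0)) := by
      have hpart : (fun N : ℕ => ∑ n ∈ Finset.range N, (h (n+1) - h n))
          = fun N : ℕ => h N - h 0 := by
        funext N; exact Finset.sum_range_sub h N
      rw [hpart]
      have htl : Filter.Tendsto (fun N : ℕ => h N) Filter.atTop (nhds 0) :=
        (hlim (R f) (hμR f)).comp (Filter.tendsto_add_atTop_nat 1)
      exact htl.sub tendsto_const_nhds
    have h5 : L (Q f) - Q f = 0 - h 0 := tendsto_nhds_unique h3 h4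
    have h0 : h 0 = L f - μ f • e := by
      simp [hh, hRf, map_sub, map_smul, hLe]
    rw [h5, h0]
    abel
  -- Q on coboundaries
  have hQcob : ∀ g : X, Q (g - Tc g) = μ g • e - g := by
    intro g
    set g' : X := g - μ g • e with hg'
    have hμg' : μ g' = 0 := by simp [hg', hμe]
    have hμc : μ (g - Tc g) = 0 := by simp [hμT]
    have hterm : ∀ n : ℕ, (L ^ (n+1)) (R (g - Tc g)) = (L ^ (n+1)) g' - (L ^ n) g' := by
      intro n
      have hR0 : R (g - Tc g) = g - Tc g := by
        rw [hRf, hμc, zero_smul, sub_zero]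
      rw [hR0]
      have hLc : L (g - Tc g) = L g' - g' := by
        simp only [hg', map_sub, map_smul, hleft, hLe]
        abel
      rw [pow_succ, ContinuousLinearMap.mul_apply, hLc, map_sub,
        ← ContinuousLinearMap.mul_apply, ← pow_succ]
    have hA : HasSum (fun n : ℕ => (L ^ (n+1)) g' - (L ^ n) g') (Q (g - Tc g)) := by
      have := hQf (g - Tc g)
      simp only [hterm] at this
      exact this
    have hB : Filter.Tendsto (fun N : ℕ => ∑ n ∈ Finset.range N, ((L ^ (n+1)) g' - (L ^ n) g'))
        Filter.atTop (nhds (0 - (L ^ 0) g')) := by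
      have hpart : (fun N : ℕ => ∑ n ∈ Finset.range N, ((L ^ (n+1)) g' - (L ^ n) g'))
          = fun N : ℕ => (L ^ N) g' - (L ^ 0) g' := by
        funext N; exact Finset.sum_range_sub (fun n => (L ^ n) g') N
      rw [hpart]
      exact (hlim g' hμg').sub tendsto_const_nhds
    have h5 : Q (g - Tc g) = 0 - (L ^ 0) g' := tendsto_nhds_unique hA.tendsto_sum_nat hB
    rw [h5, pow_zero]
    simp only [ContinuousLinearMap.one_apply, hg']
    abel
  -- the projection onto ker L along C
  set P : X →L[ℝ] X :=
    ContinuousLinearMap.id ℝ X + (ContinuousLinearMap.id ℝ X - Tc).comp Q - μ.smulRight e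
    with hP
  have hPapp : ∀ f : X, P f = f + (Q f - Tc (Q f)) - μ f • e := by
    intro f
    simp [hP, ContinuousLinearMap.sub_apply]
  have hPker : ∀ f : X, L (P f) = 0 := by
    intro f
    have h6 : L (P f) = L f + (L (Q f) - Q f) - μ f • e := by
      rw [hPapp]
      simp only [map_add, map_sub, map_smul, hleft, hLe]
    rw [h6, hLQ f]
    abel
  have hPid : ∀ f : X, L f = 0 → P f = f := by
    intro f h
    rw [hPapp, hQker f h, hμker f h]
    simp
  have hPe : P e = 0 := by
    rw [hPapp, hQe, hμe]
    simp
  have hPcobd : ∀ g : X, P (g - Tc g) = 0 := by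
    intro g
    have hμc : μ (g - Tc g) = 0 := by simp [hμT]
    rw [hPapp, hQcob g, hμc, zero_smul, sub_zero]
    simp only [map_sub, map_smul, hTe]
    abel
  -- P vanishes on C
  have hPC : ∀ f ∈ C, P f = 0 := by
    intro f hf
    rw [hC] at hf
    rcases Submodule.mem_sup.mp hf with ⟨a, ha, b, hb, rfl⟩
    rcases ha with ⟨g, rfl⟩
    rcases Submodule.mem_span_singleton.mp hb with ⟨c, rfl⟩
    have hag : (((ContinuousLinearMap.id ℝ X - Tc : X →L[ℝ] X) : X →ₗ[ℝ] X)) g = g - Tc g := by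
      simp [ContinuousLinearMap.sub_apply]
    rw [map_add, map_smul, hPe, smul_zero, add_zero, hag, hPcobd]
  -- f - P f lies in C
  have hfC : ∀ f : X, f - P f ∈ C := by
    intro f
    have hrepr : f - P f =
        (((ContinuousLinearMap.id ℝ X - Tc : X →L[ℝ] X) : X →ₗ[ℝ] X)) (-(Q f)) + μ f • e := by
      rw [hPapp]
      simp only [ContinuousLinearMap.coe_coe, ContinuousLinearMap.sub_apply,
        ContinuousLinearMap.coe_id', id_eq, map_neg]
      abel
    rw [hrepr, hC]
    exact Submodule.add_mem_sup (LinearMap.mem_range_self _ _)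
      (Submodule.mem_span_singleton.mpr ⟨μ f, rfl⟩)
  have hCset : (C : Set X) = P ⁻¹' {0} := by
    ext f
    simp only [SetLike.mem_coe, Set.mem_preimage, Set.mem_singleton_iff]
    constructor
    · intro hf; exact hPC f hf
    · intro hf
      have := hfC f
      rwa [hf, sub_zero] at this
  refine ⟨?_, ?_⟩
  · exact hCset ▸ isClosed_singleton.preimage P.continuous
  · constructor
    · rw [Submodule.disjoint_def]
      intro f hfk hfc
      have h1 : P f = f := hPid f (LinearMap.mem_ker.mp hfk)
      have h2 : P f = 0 := hPC f hfc
      rw [← h1, h2]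
    · rw [codisjoint_iff, eq_top_iff]
      intro f _
      have h1 : P f ∈ LinearMap.ker ((L : X →L[ℝ] X) : X →ₗ[ℝ] X) :=
        LinearMap.mem_ker.mpr (hPker f)
      have h2 := hfC f
      have h3 : f = P f + (f - P f) := by abel
      rw [h3]
      exact Submodule.add_mem_sup h1 h2
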